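/- For a complex symplectic matrix S, the spectral decomposition of ℂ^{2n} into the subspaces F_λ (equal to E_λ if |λ| = 1, and E_λ ⊕ E_{conj(λ)⁻¹} if |λ| > 1, where λ runs over eigenvalues with |λ| ≥ 1) is orthogonal with respect to the Krein form g(v,w) = ⟨iJ v, w⟩, and g restricted to each F_λ is non-degenerate. -/

import Mathlib

open Matrix Polynomial

/-- The standard complex structure on `ℂ^{2n}`, in block form `(0, -I; I, 0)`. -/
noncomputable def Jc (n : ℕ) : Matrix (Fin n ⊕ Fin n) (Fin n ⊕ Fin n) ℂ :=
  Matrix.fromBlocks 0 (-1) 1 0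

/-- The Krein Hermitian form `g(v, w) = ⟨iJ v, w⟩` on `ℂ^{2n}`. -/
noncomputable def kreinForm (n : ℕ) (v w : (Fin n ⊕ Fin n) → ℂ) : ℂ :=
  star ((Complex.I • Jc n).mulVec v) ⬝ᵥ w

/-- The generalized eigenspace `E_λ = ∪_j ker (S - λ I)^j`. -/
noncomputable def genEig (n : ℕ) (S : Matrix (Fin n ⊕ Fin n) (Fin n ⊕ Fin n) ℂ) (lam : ℂ) :
    Submodule ℂ ((Fin n ⊕ Fin n) → ℂ) :=
  ⨆ j : ℕ, LinearMap.ker (Matrix.toLin' (S - lam • 1) ^ j)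

/-- `F_λ = E_λ` when `|λ| = 1` and `F_λ = E_λ ⊕ E_{(conj λ)⁻¹}` when `|λ| > 1`; note that
for `|λ| = 1` one has `(conj λ)⁻¹ = λ`, so this uniform definition agrees with both cases. -/
noncomputable def Fspace (n : ℕ) (S : Matrix (Fin n ⊕ Fin n) (Fin n ⊕ Fin n) ℂ) (lam : ℂ) :
    Submodule ℂ ((Fin n ⊕ Fin n) → ℂ) :=
  genEig n S lam ⊔ genEig n S ((starRingEnd ℂ lam)⁻¹)

lemma Jc_mul_Jc (n : ℕ) : Jc n * Jc n = -1 := by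
  rw [Jc, Matrix.fromBlocks_multiply, ← Matrix.fromBlocks_one, Matrix.fromBlocks_neg]
  simp

lemma Jc_conjTranspose (n : ℕ) : (Jc n)ᴴ = -Jc n := by
  rw [Jc, Matrix.fromBlocks_conjTranspose, Matrix.fromBlocks_neg]
  simp

lemma K_herm (n : ℕ) : (Complex.I • Jc n)ᴴ = Complex.I • Jc n := by
  rw [Matrix.conjTranspose_smul, Jc_conjTranspose]
  simp [Complex.star_def]

lemma K_mul_K (n : ℕ) : (Complex.I • Jc n) * (Complex.I • Jc n) = 1 := by
  rw [Matrix.smul_mul, Matrix.mul_smul, Jc_mul_Jc, smul_smul, Complex.I_mul_I]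
  simp

lemma kreinForm_eq (n : ℕ) (v w : (Fin n ⊕ Fin n) → ℂ) :
    kreinForm n v w = star v ⬝ᵥ ((Complex.I • Jc n) *ᵥ w) := by
  rw [kreinForm, Matrix.star_mulVec, Matrix.dotProduct_mulVec, K_herm]

lemma kreinForm_add_right (n : ℕ) (v w w' : (Fin n ⊕ Fin n) → ℂ) :
    kreinForm n v (w + w') = kreinForm n v w + kreinForm n v w' := by
  simp [kreinForm, dotProduct_add]

lemma kreinForm_smul_right (n : ℕ) (c : ℂ) (v w : (Fin n ⊕ Fin n) → ℂ) :
    kreinForm n v (c • w) = c * kreinForm n v w := by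
  simp [kreinForm, dotProduct_smul, smul_eq_mul]

lemma kreinForm_zero_right (n : ℕ) (v : (Fin n ⊕ Fin n) → ℂ) :
    kreinForm n v 0 = 0 := by
  simp [kreinForm]

lemma kreinForm_add_left (n : ℕ) (v v' w : (Fin n ⊕ Fin n) → ℂ) :
    kreinForm n (v + v') w = kreinForm n v w + kreinForm n v' w := by
  simp [kreinForm, Matrix.mulVec_add, add_dotProduct]

lemma kreinForm_smul_left (n : ℕ) (c : ℂ) (v w : (Fin n ⊕ Fin n) → ℂ) :
    kreinForm n (c • v) w = (starRingEnd ℂ c) * kreinForm n v w := by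
  simp [kreinForm, Matrix.mulVec_smul, smul_dotProduct, smul_eq_mul, Complex.star_def]

lemma kreinForm_zero_left (n : ℕ) (w : (Fin n ⊕ Fin n) → ℂ) :
    kreinForm n 0 w = 0 := by
  simp [kreinForm]

lemma kreinForm_invariant (n : ℕ) (S : Matrix (Fin n ⊕ Fin n) (Fin n ⊕ Fin n) ℂ)
    (hS : Sᴴ * Jc n * S = Jc n) (v w : (Fin n ⊕ Fin n) → ℂ) :
    kreinForm n (S *ᵥ v) (S *ᵥ w) = kreinForm n v w := by
  have hK : Sᴴ * (Complex.I • Jc n) * S = Complex.I • Jc n := by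
    rw [Matrix.mul_smul, Matrix.smul_mul, hS]
  rw [kreinForm_eq, kreinForm_eq, Matrix.star_mulVec, Matrix.mulVec_mulVec,
    Matrix.dotProduct_mulVec, Matrix.vecMul_vecMul, ← Matrix.dotProduct_mulVec,
    ← Matrix.mulVec_mulVec]
  rw [Matrix.mulVec_mulVec, ← Matrix.mul_assoc, hK]

lemma krein_ortho_aux (n : ℕ) (S : Matrix (Fin n ⊕ Fin n) (Fin n ⊕ Fin n) ℂ)
    (hS : Sᴴ * Jc n * S = Jc n) :
    ∀ N : ℕ, ∀ a b : ℂ, (starRingEnd ℂ a) * b ≠ 1 → ∀ p q : ℕ, p + q ≤ N →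
    ∀ v ∈ LinearMap.ker ((Matrix.toLin' (S - a • 1)) ^ p),
    ∀ w ∈ LinearMap.ker ((Matrix.toLin' (S - b • 1)) ^ q), kreinForm n v w = 0 := by
  intro N
  induction N with
  | zero =>
    intro a b hab p q hpq v hv w hw
    have hp : p = 0 := by omega
    subst hp
    rw [pow_zero, LinearMap.mem_ker] at hv
    rw [show v = 0 from hv, kreinForm_zero_left]
  | succ N ih =>
    intro a b hab p q hpq v hv w hw
    rcases p with _ | p
    · rw [pow_zero, LinearMap.mem_ker] at hv
      rw [show v = 0 from hv, kreinForm_zero_left]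
    rcases q with _ | q
    · rw [pow_zero, LinearMap.mem_ker] at hw
      rw [show w = 0 from hw, kreinForm_zero_right]
    set fa := Matrix.toLin' (S - a • (1 : Matrix (Fin n ⊕ Fin n) (Fin n ⊕ Fin n) ℂ)) with hfa
    set fb := Matrix.toLin' (S - b • (1 : Matrix (Fin n ⊕ Fin n) (Fin n ⊕ Fin n) ℂ)) with hfb
    have hva : fa v ∈ LinearMap.ker (fa ^ p) := by
      rw [LinearMap.mem_ker, ← Module.End.mul_apply, ← pow_succ]
      exact LinearMap.mem_ker.mp hv
    have hwb : fb w ∈ LinearMap.ker (fb ^ q) := by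
      rw [LinearMap.mem_ker, ← Module.End.mul_apply, ← pow_succ]
      exact LinearMap.mem_ker.mp hw
    have hSv : S *ᵥ v = a • v + fa v := by
      rw [hfa, Matrix.toLin'_apply, Matrix.sub_mulVec, Matrix.smul_mulVec,
        Matrix.one_mulVec]
      abel
    have hSw : S *ᵥ w = b • w + fb w := by
      rw [hfb, Matrix.toLin'_apply, Matrix.sub_mulVec, Matrix.smul_mulVec,
        Matrix.one_mulVec]
      abel
    have key : kreinForm n v w = (starRingEnd ℂ a) * b * kreinForm n v w := by
      conv_lhs => rw [← kreinForm_invariant n S hS v w]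
      rw [hSv, hSw]
      simp only [kreinForm_add_left, kreinForm_add_right, kreinForm_smul_left,
        kreinForm_smul_right]
      rw [ih a b hab (p + 1) q (by omega) v hv (fb w) hwb,
        ih a b hab p (q + 1) (by omega) (fa v) hva w hw,
        ih a b hab p q (by omega) (fa v) hva (fb w) hwb]
      ring
    have h1 : (1 - (starRingEnd ℂ a) * b) ≠ 0 := sub_ne_zero.mpr (Ne.symm hab)
    have h2 : (1 - (starRingEnd ℂ a) * b) * kreinForm n v w = 0 := by
      linear_combination key
    exact (mul_eq_zero.mp h2).resolve_left h1

lemma mem_genEig_iff (n : ℕ) (S : Matrix (Fin n ⊕ Fin n) (Fin n ⊕ Fin n) ℂ) (lam : ℂ)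
    (v : (Fin n ⊕ Fin n) → ℂ) :
    v ∈ genEig n S lam ↔ ∃ j : ℕ, ((Matrix.toLin' (S - lam • 1)) ^ j) v = 0 := by
  have hmono : Monotone (fun j : ℕ => LinearMap.ker ((Matrix.toLin' (S - lam • 1)) ^ j)) := by
    intro i j hij x hx
    simp only [LinearMap.mem_ker] at hx ⊢
    obtain ⟨k, rfl⟩ := Nat.exists_eq_add_of_le hij
    rw [add_comm, pow_add, Module.End.mul_apply, hx, map_zero]
  rw [genEig, Submodule.mem_iSup_of_directed _ hmono.directed_le]
  simp only [LinearMap.mem_ker]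

lemma genEig_ortho (n : ℕ) (S : Matrix (Fin n ⊕ Fin n) (Fin n ⊕ Fin n) ℂ)
    (hS : Sᴴ * Jc n * S = Jc n) (a b : ℂ) (hab : (starRingEnd ℂ a) * b ≠ 1) :
    ∀ v ∈ genEig n S a, ∀ w ∈ genEig n S b, kreinForm n v w = 0 := by
  intro v hv w hw
  obtain ⟨p, hp⟩ := (mem_genEig_iff n S a v).mp hv
  obtain ⟨q, hq⟩ := (mem_genEig_iff n S b w).mp hw
  exact krein_ortho_aux n S hS (p + q) a b hab p q le_rfl v (LinearMap.mem_ker.mpr hp)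
    w (LinearMap.mem_ker.mpr hq)

lemma conj_mul_self_one {a : ℂ} (ha : ‖a‖ = 1) : (starRingEnd ℂ a) * a = 1 := by
  rw [Complex.conj_mul', ha]
  norm_num

lemma pair_ne_one (lam mu : ℂ) (hl : 1 ≤ ‖lam‖) (hm : 1 ≤ ‖mu‖)
    (hne : lam ≠ mu) :
    (starRingEnd ℂ lam) * mu ≠ 1 ∧
    (starRingEnd ℂ lam) * ((starRingEnd ℂ mu)⁻¹) ≠ 1 ∧
    (starRingEnd ℂ ((starRingEnd ℂ lam)⁻¹)) * mu ≠ 1 ∧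
    (starRingEnd ℂ ((starRingEnd ℂ lam)⁻¹)) * ((starRingEnd ℂ mu)⁻¹) ≠ 1 := by
  have hlam0 : lam ≠ 0 := by
    intro h; rw [h] at hl; simp at hl; linarith
  have hmu0 : mu ≠ 0 := by
    intro h; rw [h] at hm; simp at hm; linarith
  have hclam0 : (starRingEnd ℂ lam) ≠ 0 := by simpa using hlam0
  have hcmu0 : (starRingEnd ℂ mu) ≠ 0 := by simpa using hmu0
  have hcc : (starRingEnd ℂ ((starRingEnd ℂ lam)⁻¹)) = lam⁻¹ := by
    rw [map_inv₀, Complex.conj_conj]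
  refine ⟨?_, ?_, ?_, ?_⟩
  · intro h
    have habs : ‖lam‖ * ‖mu‖ = 1 := by
      have := congrArg (‖·‖) h
      simpa using this
    have hl1 : ‖lam‖ = 1 := by nlinarith
    have : (starRingEnd ℂ lam) * lam = 1 := conj_mul_self_one hl1
    exact hne ((mul_left_cancel₀ hclam0 (this.trans h.symm)))
  · intro h
    rw [mul_inv_eq_one₀ hcmu0] at h
    exact hne ((starRingEnd ℂ).injective h)
  · intro h
    rw [hcc, inv_mul_eq_one₀ hlam0] at h
    exact hne h
  · intro h
    rw [hcc] at h
    have h2 : lam * (starRingEnd ℂ mu) = 1 := by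
      field_simp at h
      linear_combination -h
    have habs : ‖lam‖ * ‖mu‖ = 1 := by
      have := congrArg (‖·‖) h2
      simpa using this
    have hm1 : ‖mu‖ = 1 := by nlinarith
    have h3 : mu * (starRingEnd ℂ mu) = 1 := by
      rw [mul_comm]; exact conj_mul_self_one hm1
    exact hne (mul_right_cancel₀ hcmu0 (h2.trans h3.symm))

lemma Fspace_ortho (n : ℕ) (S : Matrix (Fin n ⊕ Fin n) (Fin n ⊕ Fin n) ℂ)
    (hS : Sᴴ * Jc n * S = Jc n) :
    ∀ lam mu : ℂ, S.charpoly.IsRoot lam → S.charpoly.IsRoot mu →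
      1 ≤ ‖lam‖ → 1 ≤ ‖mu‖ → lam ≠ mu →
      ∀ v ∈ Fspace n S lam, ∀ w ∈ Fspace n S mu, kreinForm n v w = 0 := by
  intro lam mu _ _ hl hm hne v hv w hw
  obtain ⟨h1, h2, h3, h4⟩ := pair_ne_one lam mu hl hm hne
  obtain ⟨v1, hv1, v2, hv2, rfl⟩ := Submodule.mem_sup.mp hv
  obtain ⟨w1, hw1, w2, hw2, rfl⟩ := Submodule.mem_sup.mp hw
  rw [kreinForm_add_left, kreinForm_add_right, kreinForm_add_right,
    genEig_ortho n S hS _ _ h1 v1 hv1 w1 hw1,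
    genEig_ortho n S hS _ _ h2 v1 hv1 w2 hw2,
    genEig_ortho n S hS _ _ h3 v2 hv2 w1 hw1,
    genEig_ortho n S hS _ _ h4 v2 hv2 w2 hw2]
  ring

lemma charpoly_isRoot_iff (n : ℕ) (S : Matrix (Fin n ⊕ Fin n) (Fin n ⊕ Fin n) ℂ) (mu : ℂ) :
    S.charpoly.IsRoot mu ↔ (S - mu • 1).det = 0 := by
  have h1 : S.charpoly.eval mu = (mu • 1 - S).det := by
    rw [Matrix.charpoly, eval_det, Matrix.matPolyEquiv_charmatrix]
    congr 1
    rw [eval_sub, eval_X, eval_C, Matrix.scalar_apply, Matrix.smul_one_eq_diagonal]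
  have h2 : (mu • 1 - S) = -(S - mu • 1) := (neg_sub _ _).symm
  constructor
  · intro h
    have := h1.symm.trans h
    rw [h2, Matrix.det_neg] at this
    simpa using this
  · intro h
    rw [IsRoot, h1, h2, Matrix.det_neg, h]
    ring

lemma detJ_ne_zero (n : ℕ) : (Jc n).det ≠ 0 := by
  have h : (Jc n).det * (Jc n).det = 1 := by
    rw [← Matrix.det_mul, Jc_mul_Jc]
    have : (-1 : Matrix (Fin n ⊕ Fin n) (Fin n ⊕ Fin n) ℂ) = -(1 : Matrix _ _ ℂ) := rfl
    rw [this, Matrix.det_neg, Matrix.det_one, mul_one, Fintype.card_sum, Fintype.card_fin]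
    exact Even.neg_one_pow ⟨n, rfl⟩
  intro h0
  rw [h0, zero_mul] at h
  exact zero_ne_one h

lemma detS_ne_zero (n : ℕ) (S : Matrix (Fin n ⊕ Fin n) (Fin n ⊕ Fin n) ℂ)
    (hS : Sᴴ * Jc n * S = Jc n) : S.det ≠ 0 := by
  intro h0
  have := congrArg Matrix.det hS
  rw [Matrix.det_mul, Matrix.det_mul, h0, mul_zero] at this
  exact detJ_ne_zero n this.symm

lemma root_symm (n : ℕ) (S : Matrix (Fin n ⊕ Fin n) (Fin n ⊕ Fin n) ℂ)
    (hS : Sᴴ * Jc n * S = Jc n) (mu : ℂ) (hmu0 : mu ≠ 0) (h : S.charpoly.IsRoot mu) :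
    S.charpoly.IsRoot ((starRingEnd ℂ mu)⁻¹) := by
  rw [charpoly_isRoot_iff] at h ⊢
  have key : (Sᴴ - mu⁻¹ • 1) * (Jc n * S) = (-mu⁻¹) • (Jc n * (S - mu • 1)) := by
    rw [sub_mul, Matrix.smul_mul, one_mul, ← Matrix.mul_assoc, hS, Matrix.mul_sub,
      Matrix.mul_smul, Matrix.mul_one, smul_sub, smul_smul, neg_mul,
      inv_mul_cancel₀ hmu0, neg_smul, neg_smul, one_smul, sub_neg_eq_add, neg_add_eq_sub]
  have hdet := congrArg Matrix.det key
  rw [Matrix.det_mul, Matrix.det_mul, Matrix.det_smul, Matrix.det_mul, h, mul_zero,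
    mul_zero] at hdet
  have hJS : (Jc n).det * S.det ≠ 0 := mul_ne_zero (detJ_ne_zero n) (detS_ne_zero n S hS)
  have hH : (Sᴴ - mu⁻¹ • 1).det = 0 := by
    rcases mul_eq_zero.mp hdet with h' | h'
    · exact h'
    · exact absurd h' hJS
  have hconj : (S - (starRingEnd ℂ mu)⁻¹ • 1)ᴴ = Sᴴ - mu⁻¹ • 1 := by
    rw [Matrix.conjTranspose_sub, Matrix.conjTranspose_smul, Matrix.conjTranspose_one]
    congr 1
    rw [Complex.star_def, map_inv₀, Complex.conj_conj]
  have := Matrix.det_conjTranspose (S - (starRingEnd ℂ mu)⁻¹ • 1)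
  rw [hconj, hH] at this
  exact star_eq_zero.mp this.symm

lemma genEig_eq_bot (n : ℕ) (S : Matrix (Fin n ⊕ Fin n) (Fin n ⊕ Fin n) ℂ) (mu : ℂ)
    (h : ¬ S.charpoly.IsRoot mu) : genEig n S mu = ⊥ := by
  rw [charpoly_isRoot_iff] at h
  have hunit : IsUnit (S - mu • 1) :=
    (Matrix.isUnit_iff_isUnit_det _).mpr (isUnit_iff_ne_zero.mpr h)
  have hinj : Function.Injective (Matrix.toLin' (S - mu • 1)) := by
    have hmv : ⇑(Matrix.toLin' (S - mu • 1)) = (S - mu • 1).mulVec :=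
      funext fun v => Matrix.toLin'_apply _ v
    rw [hmv]
    exact Matrix.mulVec_injective_iff_isUnit.mpr hunit
  have hpow : ∀ j : ℕ, LinearMap.ker ((Matrix.toLin' (S - mu • 1)) ^ j) = ⊥ := by
    intro j
    induction j with
    | zero => simp [pow_zero, LinearMap.ker_eq_bot]; exact fun a b hab => hab
    | succ j ihj =>
      rw [LinearMap.ker_eq_bot] at ihj ⊢
      rw [pow_succ]
      exact fun x y hxy => hinj (ihj (by simpa using hxy))
  rw [genEig, iSup_eq_bot]
  exact hpow

lemma genEig_eq_max (n : ℕ) (S : Matrix (Fin n ⊕ Fin n) (Fin n ⊕ Fin n) ℂ) (mu : ℂ) :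
    genEig n S mu = Module.End.maxGenEigenspace (Matrix.toLin' S) mu := by
  have hEnd : Matrix.toLin' S - mu • (1 : Module.End ℂ ((Fin n ⊕ Fin n) → ℂ)) =
      Matrix.toLin' (S - mu • 1) := by
    have h1 : Matrix.toLin' (S - mu • (1 : Matrix (Fin n ⊕ Fin n) (Fin n ⊕ Fin n) ℂ)) =
        Matrix.toLin' S - Matrix.toLin' (mu • 1) := map_sub _ _ _
    have h2 : Matrix.toLin' (mu • (1 : Matrix (Fin n ⊕ Fin n) (Fin n ⊕ Fin n) ℂ)) =
        mu • Matrix.toLin' 1 := _root_.map_smul _ _ _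
    rw [h1, h2, Matrix.toLin'_one]
    rfl
  ext v
  rw [mem_genEig_iff, Module.End.mem_maxGenEigenspace]
  simp_rw [hEnd]

lemma Fspace_top (n : ℕ) (S : Matrix (Fin n ⊕ Fin n) (Fin n ⊕ Fin n) ℂ)
    (hS : Sᴴ * Jc n * S = Jc n) :
    (⨆ lam ∈ {z : ℂ | S.charpoly.IsRoot z ∧ 1 ≤ ‖z‖}, Fspace n S lam) = ⊤ := by
  apply top_unique
  rw [← Module.End.iSup_maxGenEigenspace_eq_top (K := ℂ) (Matrix.toLin' S)]
  apply iSup_le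
  intro mu
  rw [← genEig_eq_max]
  by_cases hroot : S.charpoly.IsRoot mu
  · by_cases habs : 1 ≤ ‖mu‖
    · exact le_trans (le_sup_left : genEig n S mu ≤ Fspace n S mu)
        (le_iSup₂ (f := fun z (_ : z ∈ {z : ℂ | S.charpoly.IsRoot z ∧ 1 ≤ ‖z‖}) =>
          Fspace n S z) mu ⟨hroot, habs⟩)
    · have hmu0 : mu ≠ 0 := by
        intro h0
        rw [h0, charpoly_isRoot_iff] at hroot
        simp at hroot
        exact detS_ne_zero n S hS hroot
      have habspos : 0 < ‖mu‖ := by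
        simpa using hmu0
      have hroot' : S.charpoly.IsRoot ((starRingEnd ℂ mu)⁻¹) := root_symm n S hS mu hmu0 hroot
      have habs' : 1 ≤ ‖(starRingEnd ℂ mu)⁻¹‖ := by
        rw [norm_inv, Complex.norm_conj]
        rw [one_le_inv_iff₀]
        exact ⟨habspos, le_of_not_ge habs⟩
      have hrw : (starRingEnd ℂ ((starRingEnd ℂ mu)⁻¹))⁻¹ = mu := by
        rw [map_inv₀, Complex.conj_conj, inv_inv]
      have hle : genEig n S mu ≤ Fspace n S ((starRingEnd ℂ mu)⁻¹) := by
        rw [Fspace, hrw]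
        exact le_sup_right
      exact le_trans hle
        (le_iSup₂ (f := fun z (_ : z ∈ {z : ℂ | S.charpoly.IsRoot z ∧ 1 ≤ ‖z‖}) =>
          Fspace n S z) ((starRingEnd ℂ mu)⁻¹) ⟨hroot', habs'⟩)
  · rw [genEig_eq_bot n S mu hroot]
    exact bot_le

open scoped ComplexOrder in

lemma krein_nondeg_global (n : ℕ) (v : (Fin n ⊕ Fin n) → ℂ) (hv : v ≠ 0) :
    kreinForm n v ((Complex.I • Jc n) *ᵥ v) ≠ 0 := by
  have hx : (Complex.I • Jc n) *ᵥ v ≠ 0 := by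
    intro h0
    have h1 : ((Complex.I • Jc n) * (Complex.I • Jc n)) *ᵥ v = v := by
      rw [K_mul_K, Matrix.one_mulVec]
    rw [← Matrix.mulVec_mulVec, h0, Matrix.mulVec_zero] at h1
    exact hv h1.symm
  intro h0
  exact hx (dotProduct_star_self_eq_zero.mp h0)

noncomputable def kreinRightLM (n : ℕ) (v : (Fin n ⊕ Fin n) → ℂ) :
    ((Fin n ⊕ Fin n) → ℂ) →ₗ[ℂ] ℂ where
  toFun := kreinForm n v
  map_add' := kreinForm_add_right n v
  map_smul' := by intro c w; simp [kreinForm_smul_right]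

lemma Fspace_nondeg (n : ℕ) (S : Matrix (Fin n ⊕ Fin n) (Fin n ⊕ Fin n) ℂ)
    (hS : Sᴴ * Jc n * S = Jc n) :
    ∀ lam : ℂ, S.charpoly.IsRoot lam → 1 ≤ ‖lam‖ →
      ∀ v ∈ Fspace n S lam, v ≠ 0 → ∃ w ∈ Fspace n S lam, kreinForm n v w ≠ 0 := by
  intro lam hroot habs v hv hv0
  have hle : (⨆ mu ∈ {z : ℂ | S.charpoly.IsRoot z ∧ 1 ≤ ‖z‖}, Fspace n S mu) ≤
      Fspace n S lam ⊔ LinearMap.ker (kreinRightLM n v) := by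
    refine iSup₂_le fun mu hmu => ?_
    by_cases hmulam : mu = lam
    · subst hmulam
      exact le_sup_left
    · refine le_trans ?_ le_sup_right
      intro w hw
      rw [LinearMap.mem_ker]
      exact Fspace_ortho n S hS lam mu hroot hmu.1 habs hmu.2
        (fun h => hmulam h.symm) v hv w hw
  have hw0 : ((Complex.I • Jc n) *ᵥ v) ∈
      Fspace n S lam ⊔ LinearMap.ker (kreinRightLM n v) := by
    apply hle
    rw [Fspace_top n S hS]
    exact Submodule.mem_top
  obtain ⟨w1, hw1, w2, hw2, heq⟩ := Submodule.mem_sup.mp hw0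
  refine ⟨w1, hw1, fun hzero => ?_⟩
  apply krein_nondeg_global n v hv0
  rw [← heq, kreinForm_add_right, hzero, zero_add]
  exact LinearMap.mem_ker.mp hw2

/-- For a complex symplectic matrix `S`, the spaces `F_λ` (for eigenvalues `λ` with
`|λ| ≥ 1`) decompose `ℂ^{2n}`, are pairwise orthogonal for the Krein form `g`, and `g`
restricted to each `F_λ` is non-degenerate. -/
theorem krein_decomposition (n : ℕ)
    (S : Matrix (Fin n ⊕ Fin n) (Fin n ⊕ Fin n) ℂ)
    (hS : Sᴴ * Jc n * S = Jc n) :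
    (∀ lam mu : ℂ, S.charpoly.IsRoot lam → S.charpoly.IsRoot mu →
      1 ≤ ‖lam‖ → 1 ≤ ‖mu‖ → lam ≠ mu →
      ∀ v ∈ Fspace n S lam, ∀ w ∈ Fspace n S mu, kreinForm n v w = 0) ∧
    (⨆ lam ∈ {z : ℂ | S.charpoly.IsRoot z ∧ 1 ≤ ‖z‖}, Fspace n S lam) = ⊤ ∧
    (∀ lam : ℂ, S.charpoly.IsRoot lam → 1 ≤ ‖lam‖ →
      ∀ v ∈ Fspace n S lam, v ≠ 0 → ∃ w ∈ Fspace n S lam, kreinForm n v w ≠ 0) := by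
  exact ⟨Fspace_ortho n S hS, Fspace_top n S hS, Fspace_nondeg n S hS⟩
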